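/- In the free-fermion setting, if the only zero-frequency single-fermion modes are two Majorana modes Γ_L, Γ_R with real wavefunctions ψ^L, ψ^R satisfying the Fourier-projection identity F_0(γ_1) = ψ^L_1 Γ_L + ψ^R_1 Γ_R and F_0(γ_{2N}) = ψ^L_{2N} Γ_L + ψ^R_{2N} Γ_R, with cross-boundary amplitudes ψ^R_1 = ψ^L_{2N} = 0 and equal edge amplitudes ψ^L_1 = ψ^R_{2N} = ξ with ξ² ≥ 1/2, then the braiding channel E_α(X) = lim_{D→∞} (1/D) Σ_n U_F^{†n} V(α)† X V(α) U_F^n at angle α_0 = arcsin(1/(√2 ξ)) satisfies E_{α_0}(Γ_R) = p Γ_L and E_{α_0}(Γ_L) = −p Γ_R, where p = √(2ξ² − 1). -/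

import Mathlib

set_option maxHeartbeats 1000000

open Matrix Complex

lemma majorana_spike {d n : ℕ} (γ : Fin n → Matrix (Fin d) (Fin d) ℂ)
    (hsq : ∀ μ, γ μ * γ μ = 1)
    (hanti : ∀ μ ν, μ ≠ ν → γ μ * γ ν = -(γ ν * γ μ))
    (i j : Fin n) (hij : i ≠ j) (ψ : Fin n → ℝ) :
    (∑ μ, (ψ μ : ℂ) • γ μ) * (γ i * γ j)
      = (γ i * γ j) * (∑ μ, (ψ μ : ℂ) • γ μ)
        + ((2 * ψ i : ℝ) : ℂ) • γ j - ((2 * ψ j : ℝ) : ℂ) • γ i := by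
  have key : ∀ μ, ((ψ μ : ℂ) • γ μ) * (γ i * γ j)
      = (γ i * γ j) * ((ψ μ : ℂ) • γ μ)
        + (if μ = i then ((2 * ψ i : ℝ) : ℂ) • γ j else 0)
        - (if μ = j then ((2 * ψ j : ℝ) : ℂ) • γ i else 0) := by
    intro μ
    by_cases hμi : μ = i
    · have hμj : μ ≠ j := fun h => hij (hμi.symm.trans h)
      rw [if_pos hμi, if_neg hμj, hμi]
      have h1 : γ i * (γ i * γ j) = γ j := by rw [← mul_assoc, hsq, one_mul]
      have h2 : (γ i * γ j) * γ i = -(γ j) := by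
        rw [mul_assoc, hanti j i hij.symm, mul_neg, h1]
      rw [smul_mul_assoc, h1, mul_smul_comm, h2]
      push_cast
      module
    · by_cases hμj : μ = j
      · rw [if_neg hμi, if_pos hμj, hμj]
        have h4 : (γ i * γ j) * γ j = γ i := by rw [mul_assoc, hsq, mul_one]
        have h3 : γ j * (γ i * γ j) = -(γ i) := by
          rw [← mul_assoc, hanti j i hij.symm, neg_mul, mul_assoc, hsq, mul_one]
        rw [smul_mul_assoc, h3, mul_smul_comm, h4]
        push_cast
        module
      · rw [if_neg hμi, if_neg hμj]
        have h5 : γ μ * (γ i * γ j) = (γ i * γ j) * γ μ := by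
          rw [← mul_assoc, hanti μ i hμi, neg_mul, mul_assoc, hanti μ j hμj,
            mul_neg, neg_neg, ← mul_assoc]
        rw [smul_mul_assoc, h5, mul_smul_comm, add_zero, sub_zero]
  rw [Finset.sum_mul, Finset.mul_sum]
  simp only [key]
  rw [Finset.sum_sub_distrib, Finset.sum_add_distrib]
  simp [Finset.sum_ite_eq']

theorem braiding_lemma_one (N d : ℕ) (hN : 0 < N)
    (γ : Fin (2 * N) → Matrix (Fin d) (Fin d) ℂ)
    (hHerm : ∀ μ, (γ μ).IsHermitian)
    (hCAR : ∀ μ ν, γ μ * γ ν + γ ν * γ μ = if μ = ν then (2 : ℂ) • 1 else 0)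
    (i j : Fin (2 * N)) (hi : (i : ℕ) = 0) (hj : (j : ℕ) = 2 * N - 1)
    (ψL ψR : Fin (2 * N) → ℝ)
    (ΓL ΓR : Matrix (Fin d) (Fin d) ℂ)
    (hΓL : ΓL = ∑ μ, (ψL μ : ℂ) • γ μ)
    (hΓR : ΓR = ∑ μ, (ψR μ : ℂ) • γ μ)
    (ξ : ℝ) (hξpos : 0 < ξ) (hξ : (1 : ℝ) / 2 ≤ ξ ^ 2)
    (hedgeL : ψL i = ξ) (hedgeR : ψR j = ξ)
    (hcrossL : ψL j = 0) (hcrossR : ψR i = 0)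
    (F₀ : Matrix (Fin d) (Fin d) ℂ →ₗ[ℂ] Matrix (Fin d) (Fin d) ℂ)
    (hF₀L : F₀ ΓL = ΓL) (hF₀R : F₀ ΓR = ΓR)
    (hF₀γ1 : F₀ (γ i) = (ξ : ℂ) • ΓL) (hF₀γ2N : F₀ (γ j) = (ξ : ℂ) • ΓR)
    (α₀ : ℝ) (hα₀ : α₀ = Real.arcsin (1 / (Real.sqrt 2 * ξ)))
    (p : ℝ) (hp : p = Real.sqrt (2 * ξ ^ 2 - 1))
    (V : Matrix (Fin d) (Fin d) ℂ)
    (hV : V = (Real.cos α₀ : ℂ) • 1 - (Real.sin α₀ : ℂ) • (γ i * γ j)) :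
    F₀ (Vᴴ * ΓR * V) = (p : ℂ) • ΓL ∧ F₀ (Vᴴ * ΓL * V) = -((p : ℂ) • ΓR) := by
  set s := Real.sin α₀ with hs_def
  set c := Real.cos α₀ with hc_def
  -- basic index fact
  have hij : i ≠ j := by
    intro h
    have : (i : ℕ) = (j : ℕ) := by rw [h]
    omega
  -- Clifford algebra facts
  have hsq : ∀ μ, γ μ * γ μ = 1 := by
    intro μ
    have h := hCAR μ μ
    rw [if_pos rfl] at h
    have h2 : (2 : ℂ) • (γ μ * γ μ) = (2 : ℂ) • (1 : Matrix (Fin d) (Fin d) ℂ) := by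
      rw [two_smul]; exact h
    exact smul_right_injective _ (two_ne_zero) h2
  have hanti : ∀ μ ν, μ ≠ ν → γ μ * γ ν = -(γ ν * γ μ) := by
    intro μ ν h
    have hc := hCAR μ ν
    rw [if_neg h] at hc
    exact eq_neg_of_add_eq_zero_left hc
  -- scalar facts
  have hsqrt2 : Real.sqrt 2 ^ 2 = 2 := Real.sq_sqrt (by norm_num)
  have hsqrt2pos : (0:ℝ) < Real.sqrt 2 := Real.sqrt_pos.mpr (by norm_num)
  have hx : (0:ℝ) < Real.sqrt 2 * ξ := by positivity
  have hxle : 1 / (Real.sqrt 2 * ξ) ≤ 1 := by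
    rw [div_le_one hx]
    nlinarith [hsqrt2, hsqrt2pos]
  have hs : s = 1 / (Real.sqrt 2 * ξ) := by
    rw [hs_def, hα₀]
    have h0 : (0:ℝ) < 1 / (Real.sqrt 2 * ξ) := by positivity
    exact Real.sin_arcsin (by linarith) hxle
  have hc : c = p / (Real.sqrt 2 * ξ) := by
    rw [hc_def, hα₀, Real.cos_arcsin, hp]
    have e1 : 1 - (1 / (Real.sqrt 2 * ξ))^2 = (2*ξ^2 - 1) / (Real.sqrt 2 * ξ)^2 := by
      field_simp
      linear_combination (ξ^2) * hsqrt2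
    rw [e1, Real.sqrt_div (by linarith), Real.sqrt_sq hx.le]
  have hckey : 2 * c * s * ξ^2 = p := by
    rw [hc, hs]
    field_simp
    linear_combination (-p) * hsqrt2
  have hskey : 2 * s^2 * ξ^2 = 1 := by
    rw [hs]
    field_simp
    linear_combination (-1) * hsqrt2
  have hpyr : c^2 + s^2 = 1 := by
    rw [hc_def, hs_def]; exact Real.cos_sq_add_sin_sq α₀
  have hpy : (c:ℂ)^2 + (s:ℂ)^2 = 1 := by exact_mod_cast hpyr
  -- matrix facts
  have hiA : γ i * (γ i * γ j) = γ j := by rw [← mul_assoc, hsq, one_mul]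
  have hjA : γ j * (γ i * γ j) = -(γ i) := by
    rw [← mul_assoc, hanti j i hij.symm, neg_mul, mul_assoc, hsq, mul_one]
  have hAA : (γ i * γ j) * (γ i * γ j) = -1 := by
    rw [mul_assoc, hjA, mul_neg, hsq]
  have hVH : Vᴴ = (c:ℂ) • 1 + (s:ℂ) • (γ i * γ j) := by
    rw [hV, conjTranspose_sub, conjTranspose_smul, conjTranspose_smul,
      conjTranspose_one, conjTranspose_mul, (hHerm i).eq, (hHerm j).eq,
      hanti j i hij.symm]
    simp [Complex.star_def, Complex.conj_ofReal, smul_neg, sub_neg_eq_add]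
  -- general conjugation formula
  have conj : ∀ (ψ : Fin (2*N) → ℝ) (Γ : Matrix (Fin d) (Fin d) ℂ),
      Γ = ∑ μ, (ψ μ:ℂ) • γ μ →
      Vᴴ * Γ * V = Γ + ((2*c*s*ψ j - 2*s^2*ψ i : ℝ):ℂ) • γ i
                     - ((2*c*s*ψ i + 2*s^2*ψ j : ℝ):ℂ) • γ j := by
    intro ψ Γ hΓ
    have hsp : Γ * (γ i * γ j)
        = (γ i * γ j) * Γ + ((2*ψ i:ℝ):ℂ) • γ j - ((2*ψ j:ℝ):ℂ) • γ i := by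
      rw [hΓ]; exact majorana_spike γ hsq hanti i j hij ψ
    have hAΓ : (γ i * γ j) * Γ
        = Γ * (γ i * γ j) - ((2*ψ i:ℝ):ℂ) • γ j + ((2*ψ j:ℝ):ℂ) • γ i := by
      rw [hsp]; abel
    have hΓAA : Γ * (γ i * γ j) * (γ i * γ j) = -Γ := by
      rw [mul_assoc, hAA, mul_neg, mul_one]
    rw [hVH, hV]
    rw [add_mul, smul_mul_assoc, smul_mul_assoc, one_mul, hAΓ]
    simp only [add_mul, sub_mul, mul_add, mul_sub, smul_mul_assoc, mul_smul_comm,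
      smul_smul, mul_one, one_mul, smul_add, smul_sub, smul_neg, hiA, hjA, hΓAA]
    push_cast
    match_scalars
    all_goals try ring
    all_goals linear_combination hpy
  constructor
  · have e := conj ψR ΓR hΓR
    rw [hcrossR, hedgeR] at e
    rw [e, map_sub, map_add, LinearMap.map_smul, LinearMap.map_smul, hF₀R, hF₀γ1, hF₀γ2N,
      smul_smul, smul_smul]
    have c1 : (((2*c*s*ξ - 2*s^2*0 : ℝ)):ℂ) * (ξ:ℂ) = (p:ℂ) := by
      have : (2*c*s*ξ - 2*s^2*0) * ξ = p := by linear_combination hckey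
      exact_mod_cast this
    have c2 : (((2*c*s*0 + 2*s^2*ξ : ℝ)):ℂ) * (ξ:ℂ) = 1 := by
      have : (2*c*s*0 + 2*s^2*ξ) * ξ = 1 := by linear_combination hskey
      exact_mod_cast this
    rw [c1, c2]
    module
  · have e := conj ψL ΓL hΓL
    rw [hcrossL, hedgeL] at e
    rw [e, map_sub, map_add, LinearMap.map_smul, LinearMap.map_smul, hF₀L, hF₀γ1, hF₀γ2N,
      smul_smul, smul_smul]
    have c3 : (((2*c*s*0 - 2*s^2*ξ : ℝ)):ℂ) * (ξ:ℂ) = -1 := by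
      have : (2*c*s*0 - 2*s^2*ξ) * ξ = -1 := by linear_combination -hskey
      exact_mod_cast this
    have c4 : (((2*c*s*ξ + 2*s^2*0 : ℝ)):ℂ) * (ξ:ℂ) = (p:ℂ) := by
      have : (2*c*s*ξ + 2*s^2*0) * ξ = p := by linear_combination hckey
      exact_mod_cast this
    rw [c3, c4]
    module
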